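/- Let φ : Y → X be a degree-n harmonic morphism of finite connected graphs, with X having more than one vertex. If φ is non-degenerate, then every spanning tree T of X lifts to a tree T̃ in Y: there is a subtree T̃ ⊆ Y mapped isomorphically onto T by φ, and T̃ may be chosen to contain any prescribed vertex y ∈ φ^{-1}(V(T)). -/

import Mathlib

open MulAction

/-- A finite multigraph without loop edges: an edge set with an incidence map
to unordered pairs of vertices, no edge being a loop. -/
structure Multigraph (V : Type*) (E : Type*) where
  ends : E → Sym2 V
  loopless : ∀ e, ¬ (ends e).IsDiag

namespace Multigraph

variable {V E : Type*}

/-- two vertices are joined by an edge -/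
def Step (Γ : Multigraph V E) (a b : V) : Prop := ∃ e, Γ.ends e = s(a, b)

/-- graph-theoretic reachability (path-connectivity) -/
def Reach (Γ : Multigraph V E) : V → V → Prop := Relation.ReflTransGen Γ.Step

/-- connectivity of a graph -/
def Connected (Γ : Multigraph V E) : Prop := ∀ a b : V, Γ.Reach a b

/-- reachability using only edges in a subset `T` -/
def ReachIn (Γ : Multigraph V E) (T : Set E) : V → V → Prop :=
  Relation.ReflTransGen (fun a b => ∃ e ∈ T, Γ.ends e = s(a, b))

/-- `T` is a spanning tree: it connects all vertices and has `|V| - 1` edges -/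
def IsSpanningTree (Γ : Multigraph V E) (T : Set E) : Prop :=
  (∀ a b : V, Γ.ReachIn T a b) ∧ Nat.card T + 1 = Nat.card V

end Multigraph

open Multigraph

theorem Sym2.isDiag_map_iff' {α β : Type*} {f : α → β} (hf : Function.Injective f)
    (z : Sym2 α) : (z.map f).IsDiag ↔ z.IsDiag := by
  induction z using Sym2.ind with
  | _ a b => simp [hf.eq_iff]

/-- A morphism of graphs: vertices map to vertices; an edge maps either to an
edge whose ends are the images of its ends, or (if the two ends have the same
image) it is vertical, collapsing to that image vertex. -/
structure GraphHom {VY EY VX EX : Type*} (ΓY : Multigraph VY EY)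
    (ΓX : Multigraph VX EX) where
  fV : VY → VX
  fE : EY → EX ⊕ VX
  map_edge : ∀ e eX, fE e = Sum.inl eX → ΓX.ends eX = (ΓY.ends e).map fV
  map_vert : ∀ e v, fE e = Sum.inr v → (ΓY.ends e).map fV = Sym2.diag v

/-- An isomorphism of multigraphs: bijections on vertices and edges preserving incidence. -/
structure GraphIso {V1 E1 V2 E2 : Type*} (Γ1 : Multigraph V1 E1)
    (Γ2 : Multigraph V2 E2) where
  vEquiv : V1 ≃ V2
  eEquiv : E1 ≃ E2
  map_ends : ∀ e, Γ2.ends (eEquiv e) = (Γ1.ends e).map vEquiv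

/-- the morphism `φ` is harmonic: for every vertex `y`, the number of edges at `y`
lying over `e'` is independent of the edge `e'` incident to `φ(y)`. -/
def GraphHomHarmonic {VY EY VX EX : Type*} {ΓY : Multigraph VY EY}
    {ΓX : Multigraph VX EX} (f : GraphHom ΓY ΓX) : Prop :=
  ∀ (y : VY) (e1 e2 : EX), f.fV y ∈ ΓX.ends e1 → f.fV y ∈ ΓX.ends e2 →
    Nat.card {e : EY // y ∈ ΓY.ends e ∧ f.fE e = Sum.inl e1} =
    Nat.card {e : EY // y ∈ ΓY.ends e ∧ f.fE e = Sum.inl e2}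

/-- the morphism `φ` is degenerate at `y`: the whole neighborhood `y(1)` is
collapsed to the vertex `φ(y)`. -/
def DegenerateAt {VY EY VX EX : Type*} {ΓY : Multigraph VY EY}
    {ΓX : Multigraph VX EX} (f : GraphHom ΓY ΓX) (y : VY) : Prop :=
  ∀ e : EY, y ∈ ΓY.ends e → f.fE e = Sum.inr (f.fV y)

section GroupAction

variable (G : Type*) [Group G] {V E : Type*} [MulAction G V] [MulAction G E]

/-- the `G`-actions on vertices and edges are compatible with the incidence structure -/
def ActsOn (Γ : Multigraph V E) : Prop :=
  ∀ (g : G) (e : E), Γ.ends (g • e) = (Γ.ends e).map (g • ·)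

/-- the action is faithful: the stabilizer of each connected component acts
faithfully on that component -/
def FaithfulOnComponents (Γ : Multigraph V E) : Prop :=
  ∀ (v : V) (g : G), Γ.Reach v (g • v) →
    (∀ w, Γ.Reach v w → g • w = w) →
    (∀ e : E, (∀ u ∈ Γ.ends e, Γ.Reach v u) → g • e = e) → g = 1

/-- harmonicity of the quotient morphism `φ_H : Y → H\Y`, expressed intrinsically:
for every vertex `y` and all non-vertical edge-orbits `H•e₁`, `H•e₂` incident to
the image vertex `H•y`, the numbers of edges at `y` lying over them agree. -/
def QuotHarmonic (Γ : Multigraph V E) (H : Subgroup G) : Prop :=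
  ∀ (y : V) (e1 e2 : E),
    ¬ ((Γ.ends e1).map (Quotient.mk (orbitRel H V))).IsDiag →
    ¬ ((Γ.ends e2).map (Quotient.mk (orbitRel H V))).IsDiag →
    (∃ h : H, y ∈ Γ.ends (h • e1)) → (∃ h : H, y ∈ Γ.ends (h • e2)) →
    Nat.card {e : E // e ∈ orbit H e1 ∧ y ∈ Γ.ends e} =
    Nat.card {e : E // e ∈ orbit H e2 ∧ y ∈ Γ.ends e}

/-- `(G,Y)` is a harmonic group action: for every subgroup `H ≤ G` the quotient
morphism `Y → H\Y` is harmonic. -/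
def HarmonicAction (Γ : Multigraph V E) : Prop :=
  ∀ H : Subgroup G, QuotHarmonic G Γ H

/-- the criterion: each vertex stabilizer acts freely on the incident edges -/
def HarmonicCrit (Γ : Multigraph V E) : Prop :=
  ∀ (g : G) (v : V) (e : E), g • v = v → v ∈ Γ.ends e → g • e = e → g = 1

end GroupAction

/-- A harmonic `G`-cover of `X`: a harmonic group action `(G,Y)` with `Y`
connected, together with a morphism `f : Y → X` realizing an isomorphism
`G\Y ≅ X`. -/
structure IsHarmonicGCover (G : Type*) [Group G] {VY EY VX EX : Type*}
    [MulAction G VY] [MulAction G EY] (ΓY : Multigraph VY EY)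
    (ΓX : Multigraph VX EX) (f : GraphHom ΓY ΓX) : Prop where
  compat : ActsOn G ΓY
  harmonic : HarmonicCrit G ΓY
  connY : ΓY.Connected
  fV_equivariant : ∀ (g : G) (v : VY), f.fV (g • v) = f.fV v
  fE_equivariant : ∀ (g : G) (e : EY), f.fE (g • e) = f.fE e
  fV_orbit : ∀ v w : VY, f.fV v = f.fV w → w ∈ orbit G v
  fE_orbit : ∀ (e e' : EY) (eX : EX), f.fE e = Sum.inl eX → f.fE e' = Sum.inl eX →
    e' ∈ orbit G e
  fV_surj : Function.Surjective f.fV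
  fE_surj : ∀ eX : EX, ∃ e : EY, f.fE e = Sum.inl eX

/-- The decomposition group at `w`: elements of `G` stabilizing the connected
component of `w` inside the fiber over `f(w)`. -/
def Decomp (G : Type*) [Group G] {VY EY VX EX : Type*} [MulAction G VY]
    (ΓY : Multigraph VY EY) {ΓX : Multigraph VX EX} (f : GraphHom ΓY ΓX)
    (w : VY) : Set G :=
  {g : G | Relation.ReflTransGen
    (fun a b => f.fV a = f.fV w ∧ f.fV b = f.fV w ∧ ∃ e, ΓY.ends e = s(a, b))
    w (g • w)}

section Cayley

variable {G : Type*} [Group G] {ι : Type*}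

/-- identification of the two directed copies of a non-involution edge in a Cayley graph -/
def cayRel (s : ι → G) (inv : ι → ι) : G × ι → G × ι → Prop :=
  fun p q => s p.2 ≠ (s p.2)⁻¹ ∧ q = (p.1 * s p.2, inv p.2)

/-- the edge set of the Cayley graph `Cay(G,S)` -/
def CayE (s : ι → G) (inv : ι → ι) : Type _ := Quot (cayRel s inv)

/-- the Cayley graph `Cay(G,S)` of a group `G` with respect to a symmetric multiset
`S`, presented as an indexed family `s : ι → G` together with an inversion pairing
`inv` on the index set.  For each `g` and `i` there is an edge from `g` to `g * s i`;
the edges for `(g, i)` and `(g * s i, inv i)` are identified when `s i` is not an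
involution; involutions yield doubled edges. -/
def Cay (s : ι → G) (inv : ι → ι) (hinv : ∀ i, s (inv i) = (s i)⁻¹)
    (hne : ∀ i, s i ≠ 1) : Multigraph G (CayE s inv) where
  ends := Quot.lift (fun p => s(p.1, p.1 * s p.2)) (by
    rintro p q ⟨-, rfl⟩
    dsimp only
    rw [hinv, mul_inv_cancel_right]
    exact Sym2.eq_swap)
  loopless := by
    intro e
    induction e using Quot.ind with
    | _ p =>
      show ¬ (s(p.1, p.1 * s p.2)).IsDiag
      simp only [Sym2.mk_isDiag_iff]
      intro h
      exact hne p.2 (mul_left_cancel (h.symm.trans (mul_one _).symm))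

instance instCayAction (s : ι → G) (inv : ι → ι) : MulAction G (CayE s inv) where
  smul g := Quot.map (fun p => (g * p.1, p.2))
    (by rintro p q ⟨hi, rfl⟩; exact ⟨hi, by simp [mul_assoc]⟩)
  one_smul e := by
    induction e using Quot.ind with
    | _ p =>
      show Quot.mk _ ((1 : G) * p.1, p.2) = Quot.mk _ p
      rw [one_mul]
  mul_smul g h e := by
    induction e using Quot.ind with
    | _ p =>
      show Quot.mk _ (g * h * p.1, p.2) = Quot.mk _ (g * (h * p.1), p.2)
      rw [mul_assoc]

end Cayley

/-- Let `φ : Y → X` be a degree-`n` harmonic morphism of finite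
connected graphs, with `X` having more than one vertex.  If `φ` is non-degenerate,
then every spanning tree `T` of `X` lifts to a tree in `Y`: there is a vertex
section `sV` of `φ` and a lift `sE` of the tree edges, mapping `T` isomorphically
onto a subtree of `Y`, and the lift may be chosen through any prescribed vertex
`y` of `Y`. -/
theorem spanning_tree_lifts
    {VY EY VX EX : Type} [Fintype VY] [Fintype EY] [Fintype VX] [Fintype EX]
    (ΓY : Multigraph VY EY) (ΓX : Multigraph VX EX) (f : GraphHom ΓY ΓX)
    (hharm : GraphHomHarmonic f) (n : ℕ)
    (hdeg : ∀ eX : EX, Nat.card {e : EY // f.fE e = Sum.inl eX} = n)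
    (hYconn : ΓY.Connected) (hXconn : ΓX.Connected)
    (hX2 : ∃ a b : VX, a ≠ b)
    (hnondeg : ∀ y : VY, ¬ DegenerateAt f y)
    (T : Set EX) (hT : ΓX.IsSpanningTree T) (y : VY) :
    ∃ (sV : VX → VY) (sE : ∀ e ∈ T, EY),
      (∀ v : VX, f.fV (sV v) = v) ∧
      (∀ (e : EX) (he : e ∈ T), f.fE (sE e he) = Sum.inl e) ∧
      (∀ (e : EX) (he : e ∈ T), ΓY.ends (sE e he) = (ΓX.ends e).map sV) ∧
      sV (f.fV y) = y := by
  classical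
  -- Step 1: any edge of X incident to the image of a vertex lifts to an edge at it.
  have lift_edge : ∀ (w : VY) (eX : EX), f.fV w ∈ ΓX.ends eX →
      ∃ e : EY, w ∈ ΓY.ends e ∧ f.fE e = Sum.inl eX := by
    intro w eX hmem
    have hnd := hnondeg w
    unfold DegenerateAt at hnd
    push_neg at hnd
    obtain ⟨e0, he0mem, he0ne⟩ := hnd
    rcases hfe : f.fE e0 with e1 | v
    case inr =>
      exfalso
      have hdiag := f.map_vert e0 v hfe
      have hm : f.fV w ∈ (ΓY.ends e0).map f.fV := Sym2.mem_map.mpr ⟨w, he0mem, rfl⟩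
      rw [hdiag, Sym2.diag, Sym2.mem_iff] at hm
      refine he0ne ?_
      rw [hfe]
      congr 1
      tauto
    have hends1 : ΓX.ends e1 = (ΓY.ends e0).map f.fV := f.map_edge e0 e1 hfe
    have hmem1 : f.fV w ∈ ΓX.ends e1 := by
      rw [hends1]; exact Sym2.mem_map.mpr ⟨w, he0mem, rfl⟩
    have hcard := hharm w e1 eX hmem1 hmem
    have hpos : 0 < Nat.card {e : EY // w ∈ ΓY.ends e ∧ f.fE e = Sum.inl e1} := by
      have : Nonempty {e : EY // w ∈ ΓY.ends e ∧ f.fE e = Sum.inl e1} :=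
        ⟨⟨e0, he0mem, hfe⟩⟩
      exact Nat.card_pos
    rw [hcard] at hpos
    obtain ⟨⟨e, h1, h2⟩⟩ := (Nat.card_pos_iff.mp hpos).1
    exact ⟨e, h1, h2⟩
  -- Step 2: a non-full vertex set containing the base point has a crossing tree edge.
  have cross : ∀ W : Finset VX, f.fV y ∈ W → W ≠ Finset.univ →
      ∃ e ∈ T, ∃ a b, a ∈ W ∧ b ∉ W ∧ ΓX.ends e = s(a, b) := by
    intro W hx0 hWne
    obtain ⟨v, hv⟩ : ∃ v, v ∉ W := by
      by_contra h; push_neg at h; exact hWne (Finset.eq_univ_iff_forall.mpr h)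
    by_contra hnc
    push_neg at hnc
    have hall : ∀ u, ΓX.ReachIn T (f.fV y) u → u ∈ W := by
      intro u hu
      induction hu with
      | refl => exact hx0
      | tail h1 h2 ih =>
        obtain ⟨e, heT, hends⟩ := h2
        by_contra hb
        exact hnc e heT _ _ ih hb hends
    exact hv (hall v (hT.1 (f.fV y) v))
  -- Step 3: grow a partial lift.
  have main : ∀ (m : ℕ) (W : Finset VX) (S : Finset EX) (sV : VX → VY) (sE : EX → EY),
      Fintype.card VX - W.card ≤ m →
      f.fV y ∈ W → sV (f.fV y) = y →
      (∀ v ∈ W, f.fV (sV v) = v) →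
      (∀ e ∈ S, e ∈ T ∧ f.fE (sE e) = Sum.inl e ∧
        ΓY.ends (sE e) = (ΓX.ends e).map sV ∧ ∀ v ∈ ΓX.ends e, v ∈ W) →
      S.card + 1 = W.card →
      ∃ (sV' : VX → VY) (sE' : EX → EY),
        (∀ v, f.fV (sV' v) = v) ∧
        (∀ e ∈ T, f.fE (sE' e) = Sum.inl e) ∧
        (∀ e ∈ T, ΓY.ends (sE' e) = (ΓX.ends e).map sV') ∧
        sV' (f.fV y) = y := by
    intro m
    induction m with
    | zero =>
      intro W S sV sE hbound hx0 hsVy hsec hedges hcard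
      -- W = univ, S = T by cardinality
      have hWuniv : W = Finset.univ := by
        apply Finset.eq_univ_of_card
        have := Finset.card_le_univ W
        omega
      have hTfin : Nat.card ↥T = T.toFinset.card := by
        rw [Nat.card_eq_fintype_card, Set.toFinset_card]
      have hVX : Nat.card VX = Fintype.card VX := Nat.card_eq_fintype_card
      have hScard : S.card = T.toFinset.card := by
        have h2 := hT.2
        rw [hTfin, hVX] at h2
        have hWc : W.card = Fintype.card VX := by rw [hWuniv, Finset.card_univ]
        omega
      have hSsub : S ⊆ T.toFinset := fun e he => Set.mem_toFinset.mpr (hedges e he).1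
      have hSeq : S = T.toFinset := Finset.eq_of_subset_of_card_le hSsub (le_of_eq hScard.symm)
      refine ⟨sV, sE, fun v => hsec v (hWuniv ▸ Finset.mem_univ v), ?_, ?_, hsVy⟩
      · intro e he
        exact (hedges e (hSeq ▸ Set.mem_toFinset.mpr he)).2.1
      · intro e he
        exact (hedges e (hSeq ▸ Set.mem_toFinset.mpr he)).2.2.1
    | succ m ih =>
      intro W S sV sE hbound hx0 hsVy hsec hedges hcard
      by_cases hWuniv : W = Finset.univ
      · -- same as base case: apply ih with bound 0 ≤ m... just redo via ih? use bound
        apply ih W S sV sE ?_ hx0 hsVy hsec hedges hcard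
        have : W.card = Fintype.card VX := by rw [hWuniv, Finset.card_univ]
        omega
      · obtain ⟨e, heT, a, b, haW, hbW, hends⟩ := cross W hx0 hWuniv
        have hab : a ≠ b := by
          intro h
          exact ΓX.loopless e (by rw [hends, h]; exact Sym2.mk_isDiag_iff.mpr rfl)
        have haE : f.fV (sV a) ∈ ΓX.ends e := by
          rw [hends, hsec a haW, Sym2.mem_iff]; left; rfl
        obtain ⟨et, hetmem, hetE⟩ := lift_edge (sV a) e haE
        set w := Sym2.Mem.other hetmem with hw
        have hetends : ΓY.ends et = s(sV a, w) := (Sym2.other_spec hetmem).symm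
        have hfw : f.fV w = b := by
          have := f.map_edge et e hetE
          rw [hetends, Sym2.map_pair_eq, hsec a haW, hends] at this
          rcases Sym2.eq_iff.mp this with ⟨-, h⟩ | ⟨-, h⟩
          · exact h.symm
          · exact absurd h.symm hab
        have heS : e ∉ S := fun hS =>
          hbW ((hedges e hS).2.2.2 b (by rw [hends, Sym2.mem_iff]; right; rfl))
        have hx0b : f.fV y ≠ b := fun h => hbW (h ▸ hx0)
        refine ih (insert b W) (insert e S) (Function.update sV b w)
          (Function.update sE e et) ?_ (Finset.mem_insert_of_mem hx0) ?_ ?_ ?_ ?_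
        · have h1 : (insert b W).card = W.card + 1 := Finset.card_insert_of_notMem hbW
          have h2 : W.card < Fintype.card VX := by
            have := Finset.card_le_univ W
            rcases lt_or_eq_of_le this with h | h
            · simpa using h
            · exact absurd (Finset.eq_univ_of_card W (by simpa using h)) hWuniv
          omega
        · rw [Function.update_of_ne hx0b, hsVy]
        · intro v hv
          rcases Finset.mem_insert.mp hv with rfl | hv
          · rw [Function.update_self]; exact hfw
          · rw [Function.update_of_ne (fun h => hbW (by rw [← h]; exact hv))]; exact hsec v hv
        · intro e' he'
          rcases Finset.mem_insert.mp he' with rfl | he'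
          · refine ⟨heT, ?_, ?_, ?_⟩
            · rw [Function.update_self]; exact hetE
            · rw [Function.update_self, hetends, hends, Sym2.map_pair_eq,
                Function.update_of_ne hab, Function.update_self]
            · intro v hv
              rw [hends, Sym2.mem_iff] at hv
              rcases hv with rfl | rfl
              · exact Finset.mem_insert_of_mem haW
              · exact Finset.mem_insert_self _ _
          · obtain ⟨h1, h2, h3, h4⟩ := hedges e' he'
            have hne : e' ≠ e := fun h => heS (h ▸ he')
            refine ⟨h1, ?_, ?_, fun v hv => Finset.mem_insert_of_mem (h4 v hv)⟩
            · rw [Function.update_of_ne hne]; exact h2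
            · rw [Function.update_of_ne hne, h3]
              exact (Sym2.map_congr fun v hv =>
                (Function.update_of_ne (fun h => hbW (by rw [← h]; exact h4 v hv)) _ _).symm)
        · rw [Finset.card_insert_of_notMem heS, Finset.card_insert_of_notMem hbW]
          omega
  -- Step 4: initialize.
  have hEYne : Nonempty EY := by
    have hnd := hnondeg y
    unfold DegenerateAt at hnd
    push_neg at hnd
    exact ⟨hnd.choose⟩
  obtain ⟨sV, sE, h1, h2, h3, h4⟩ :=
    main (Fintype.card VX) {f.fV y} ∅ (fun _ => y) (fun _ => Classical.arbitrary EY)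
      (by omega) (Finset.mem_singleton_self _) rfl
      (fun v hv => by rw [Finset.mem_singleton.mp hv])
      (fun e he => absurd he (Finset.notMem_empty e))
      (by simp)
  exact ⟨sV, fun e _ => sE e, h1, fun e he => h2 e he, fun e he => h3 e he, h4⟩
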